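/- Log and Exp are mutually inverse: for every f ∈ z·R⟦z⟧ one has Log(Exp(f)) = f, and for every h ∈ 1 + z·R⟦z⟧ one has Exp(Log(h)) = h. In particular, Exp is a bijection from z·R⟦z⟧ onto 1 + z·R⟦z⟧. -/

import Mathlib

open PowerSeries

/-- The formal exponential `exp(f) = Σ_{m≥0} f^m/m!` of a power series (intended for `f` with
zero constant term, in which case `coeff k (f^m) = 0` for `m > k` and the defining sum is
finite). -/
noncomputable def pexp {R : Type*} [CommRing R] [Algebra ℚ R] (f : PowerSeries R) :
    PowerSeries R :=
  PowerSeries.mk fun k => ∑ m ∈ Finset.range (k + 1),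
    ((m.factorial : ℚ))⁻¹ • (PowerSeries.coeff k (f ^ m))

/-- The formal logarithm `log(h) = Σ_{m≥1} (−1)^{m+1}(h−1)^m/m` of a power series (intended
for `h` with constant term `1`). -/
noncomputable def plog {R : Type*} [CommRing R] [Algebra ℚ R] (h : PowerSeries R) :
    PowerSeries R :=
  PowerSeries.mk fun k => ∑ m ∈ Finset.Icc 1 k,
    (((-1 : ℚ) ^ (m + 1)) / m) • (PowerSeries.coeff k ((h - 1) ^ m))

/-- The extension of the Adams operation `ψₙ` to `R⟦z⟧`:
`ψₙ(Σₖ aₖ zᵏ) = Σₖ ψₙ(aₖ) z^{nk}`. -/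
noncomputable def adams {R : Type*} [CommRing R] [Algebra ℚ R]
    (ψ : ℕ → R →ₐ[ℚ] R) (n : ℕ) (f : PowerSeries R) : PowerSeries R :=
  PowerSeries.mk fun k => if n ∣ k then ψ n (PowerSeries.coeff (k / n) f) else 0

/-- The plethystic exponential `Exp(f) = exp(Σ_{n≥1} ψₙ(f)/n)` (for `f ∈ z·R⟦z⟧`). -/
noncomputable def PExp {R : Type*} [CommRing R] [Algebra ℚ R]
    (ψ : ℕ → R →ₐ[ℚ] R) (f : PowerSeries R) : PowerSeries R :=
  pexp (PowerSeries.mk fun k =>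
    ∑ n ∈ k.divisors, ((n : ℚ))⁻¹ • PowerSeries.coeff k (adams ψ n f))

/-- The plethystic logarithm `Log(h) = Σ_{n≥1} (μ(n)/n)·ψₙ(log h)` (for `h ∈ 1 + z·R⟦z⟧`). -/
noncomputable def PLog {R : Type*} [CommRing R] [Algebra ℚ R]
    (ψ : ℕ → R →ₐ[ℚ] R) (h : PowerSeries R) : PowerSeries R :=
  PowerSeries.mk fun k => ∑ n ∈ k.divisors,
    (((ArithmeticFunction.moebius n : ℤ) : ℚ) / n) • PowerSeries.coeff k (adams ψ n (plog h))


section PlethAux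

variable {R : Type*} [CommRing R] [Algebra ℚ R]

theorem PlethAux.nzs : NoZeroSMulDivisors ℕ R := by
  constructor
  intro c x h
  rcases eq_or_ne c 0 with rfl | hc
  · exact Or.inl rfl
  · refine Or.inr ?_
    have h2 : (c : ℚ) • x = 0 := by rw [Nat.cast_smul_eq_nsmul]; exact h
    have h3 := congrArg (fun y => ((c : ℚ))⁻¹ • y) h2
    simpa [smul_smul, inv_mul_cancel₀ (show (c : ℚ) ≠ 0 from Nat.cast_ne_zero.mpr hc)] using h3

theorem coeff_pow_zero {f : PowerSeries R} (hf : constantCoeff f = 0) {k m : ℕ}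
    (hkm : k < m) : coeff k (f ^ m) = 0 := by
  obtain ⟨g, rfl⟩ := X_dvd_iff.mpr hf
  rw [mul_pow, coeff_mul]
  apply Finset.sum_eq_zero
  intro p hp
  have hpk : p.1 + p.2 = k := Finset.HasAntidiagonal.mem_antidiagonal.mp hp
  rw [coeff_X_pow, if_neg (by omega), zero_mul]

noncomputable def Epart (f : PowerSeries R) (N : ℕ) : PowerSeries R :=
  ∑ m ∈ Finset.range (N + 1), ((m.factorial : ℚ))⁻¹ • f ^ m

theorem coeff_pexp {f : PowerSeries R} (hf : constantCoeff f = 0) {k N : ℕ} (hkN : k ≤ N) :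
    coeff k (pexp f) = coeff k (Epart f N) := by
  rw [pexp, coeff_mk, Epart, map_sum]
  simp_rw [coeff_smul]
  apply Finset.sum_subset
  · exact Finset.range_subset_range.mpr (by omega)
  · intro m hm hmk
    simp only [Finset.mem_range] at hm hmk
    rw [coeff_pow_zero hf (by omega), smul_zero]

theorem cc_pexp (f : PowerSeries R) : constantCoeff (pexp f) = 1 := by
  rw [pexp, constantCoeff_mk]
  simp

noncomputable def Lpart (h : PowerSeries R) (N : ℕ) : PowerSeries R :=
  ∑ m ∈ Finset.Icc 1 N, (((-1 : ℚ) ^ (m + 1)) / m) • (h - 1) ^ m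

theorem coeff_plog {h : PowerSeries R} (hh : constantCoeff h = 1) {k N : ℕ} (hkN : k ≤ N) :
    coeff k (plog h) = coeff k (Lpart h N) := by
  have h1 : constantCoeff (h - 1) = 0 := by simp [hh]
  rw [plog, coeff_mk, Lpart, map_sum]
  simp_rw [coeff_smul]
  apply Finset.sum_subset
  · intro m hm; simp only [Finset.mem_Icc] at *; omega
  · intro m hm hmk
    simp only [Finset.mem_Icc] at hm hmk
    rw [coeff_pow_zero h1 (by omega), smul_zero]

theorem cc_plog (h : PowerSeries R) : constantCoeff (plog h) = 0 := by
  rw [plog, constantCoeff_mk]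
  simp

theorem d_qsmul (q : ℚ) (f : PowerSeries R) : d⁄dX R (q • f) = q • d⁄dX R f := by
  ext k
  rw [coeff_derivative, coeff_smul, coeff_smul, coeff_derivative, smul_mul_assoc]

theorem d_Epart (f : PowerSeries R) (N : ℕ) :
    d⁄dX R (Epart f (N + 1)) = d⁄dX R f * Epart f N := by
  rw [Epart, map_sum, Finset.sum_range_succ']
  have h0 : d⁄dX R (((Nat.factorial 0 : ℚ))⁻¹ • f ^ 0) = 0 := by
    rw [d_qsmul, pow_zero]
    simp [Derivation.map_one_eq_zero]
  rw [h0, add_zero, Epart, Finset.mul_sum]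
  apply Finset.sum_congr rfl
  intro j hj
  have hfac : (((j + 1).factorial : ℚ))⁻¹ * (((j + 1 : ℕ) : ℚ)) = ((j.factorial : ℚ))⁻¹ := by
    rw [Nat.factorial_succ]
    push_cast
    have h1 : ((j : ℚ) + 1) ≠ 0 := by positivity
    have h2 : ((j.factorial : ℚ)) ≠ 0 := Nat.cast_ne_zero.mpr j.factorial_ne_zero
    field_simp
  calc d⁄dX R ((((j + 1).factorial : ℚ))⁻¹ • f ^ (j + 1))
      = (((j + 1).factorial : ℚ))⁻¹ • ((j + 1) • (f ^ j * d⁄dX R f)) := by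
        rw [d_qsmul, Derivation.leibniz_pow, Nat.add_sub_cancel, smul_eq_mul]
    _ = ((((j + 1).factorial : ℚ))⁻¹ * (((j + 1 : ℕ) : ℚ))) • (f ^ j * d⁄dX R f) := by
        rw [← Nat.cast_smul_eq_nsmul ℚ (j + 1), smul_smul]
    _ = ((j.factorial : ℚ))⁻¹ • (f ^ j * d⁄dX R f) := by rw [hfac]
    _ = d⁄dX R f * ((j.factorial : ℚ))⁻¹ • f ^ j := by
        rw [mul_smul_comm, mul_comm (f ^ j)]

theorem d_pexp {f : PowerSeries R} (hf : constantCoeff f = 0) :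
    d⁄dX R (pexp f) = d⁄dX R f * pexp f := by
  ext k
  rw [coeff_derivative, coeff_pexp hf (Nat.le_refl (k + 1)), ← coeff_derivative, d_Epart,
    coeff_mul, coeff_mul]
  apply Finset.sum_congr rfl
  intro p hp
  have hp2 : p.2 ≤ k := by have := Finset.HasAntidiagonal.mem_antidiagonal.mp hp; omega
  rw [coeff_pexp hf hp2]

theorem sum_Icc_one {M : Type*} [AddCommMonoid M] (N : ℕ) (F : ℕ → M) :
    ∑ m ∈ Finset.Icc 1 N, F m = ∑ j ∈ Finset.range N, F (j + 1) := by
  refine Finset.sum_nbij' (fun m => m - 1) (fun j => j + 1) ?_ ?_ ?_ ?_ ?_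
  · intro a ha; simp only [Finset.mem_Icc] at ha; simp only [Finset.mem_range]; omega
  · intro a ha; simp only [Finset.mem_range] at ha; simp only [Finset.mem_Icc]; omega
  · intro a ha; simp only [Finset.mem_Icc] at ha; omega
  · intro a _; omega
  · intro a ha; simp only [Finset.mem_Icc] at ha; congr 1; omega

theorem d_Lpart (h : PowerSeries R) (N : ℕ) :
    d⁄dX R (Lpart h (N + 1)) = (∑ j ∈ Finset.range (N + 1), (-(h - 1)) ^ j) * d⁄dX R h := by
  rw [Lpart, map_sum, sum_Icc_one (N + 1) (fun m => d⁄dX R ((((-1 : ℚ) ^ (m + 1)) / m) • (h - 1) ^ m)),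
    Finset.sum_mul]
  apply Finset.sum_congr rfl
  intro j hj
  have hd1 : d⁄dX R (h - 1) = d⁄dX R h := by
    rw [map_sub, Derivation.map_one_eq_zero, sub_zero]
  have hsc : ((-1 : ℚ) ^ (j + 1 + 1) / ((j + 1 : ℕ) : ℚ)) * (((j + 1 : ℕ) : ℚ)) = (-1 : ℚ) ^ j := by
    have h1 : (((j + 1 : ℕ) : ℚ)) ≠ 0 := by push_cast; positivity
    field_simp
    ring
  calc d⁄dX R ((((-1 : ℚ) ^ (j + 1 + 1)) / ((j + 1 : ℕ) : ℚ)) • (h - 1) ^ (j + 1))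
      = (((-1 : ℚ) ^ (j + 1 + 1)) / ((j + 1 : ℕ) : ℚ)) • ((j + 1) • ((h - 1) ^ j * d⁄dX R h)) := by
        rw [d_qsmul, Derivation.leibniz_pow, Nat.add_sub_cancel, smul_eq_mul, hd1]
    _ = ((((-1 : ℚ) ^ (j + 1 + 1)) / ((j + 1 : ℕ) : ℚ)) * (((j + 1 : ℕ) : ℚ))) •
          ((h - 1) ^ j * d⁄dX R h) := by
        rw [← Nat.cast_smul_eq_nsmul ℚ (j + 1), smul_smul]
    _ = ((-1 : ℚ) ^ j) • ((h - 1) ^ j * d⁄dX R h) := by rw [hsc]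
    _ = (-(h - 1)) ^ j * d⁄dX R h := by
        rw [← smul_mul_assoc, ← smul_pow, neg_one_smul]

theorem d_plog {h : PowerSeries R} (hh : constantCoeff h = 1) :
    h * d⁄dX R (plog h) = d⁄dX R h := by
  have h1 : constantCoeff (h - 1) = 0 := by simp [hh]
  ext k
  rw [coeff_mul]
  have step : ∀ p ∈ Finset.HasAntidiagonal.antidiagonal k,
      coeff p.1 h * coeff p.2 (d⁄dX R (plog h))
        = coeff p.1 h * coeff p.2 (d⁄dX R (Lpart h (k + 1))) := by
    intro p hp
    have hp2 : p.2 + 1 ≤ k + 1 := by have := Finset.HasAntidiagonal.mem_antidiagonal.mp hp; omega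
    rw [coeff_derivative, coeff_derivative, coeff_plog hh hp2]
  rw [Finset.sum_congr rfl step, ← coeff_mul]
  have key : h * d⁄dX R (Lpart h (k + 1))
      = d⁄dX R h - (-(h - 1)) ^ (k + 1) * d⁄dX R h := by
    rw [d_Lpart]
    have hgeom := geom_sum_mul (-(h - 1)) (k + 1)
    calc h * ((∑ j ∈ Finset.range (k + 1), (-(h - 1)) ^ j) * d⁄dX R h)
        = -((∑ j ∈ Finset.range (k + 1), (-(h - 1)) ^ j) * ((-(h - 1)) - 1)) * d⁄dX R h := by
          ring
      _ = -((-(h - 1)) ^ (k + 1) - 1) * d⁄dX R h := by rw [hgeom]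
      _ = d⁄dX R h - (-(h - 1)) ^ (k + 1) * d⁄dX R h := by ring
  rw [key, map_sub, coeff_mul]
  have hz : ∑ p ∈ Finset.HasAntidiagonal.antidiagonal k,
      coeff p.1 ((-(h - 1)) ^ (k + 1)) * coeff p.2 (d⁄dX R h) = 0 := by
    apply Finset.sum_eq_zero
    intro p hp
    have hpk : p.1 + p.2 = k := Finset.HasAntidiagonal.mem_antidiagonal.mp hp
    rw [coeff_pow_zero (by simp [hh]) (show p.1 < k + 1 by omega), zero_mul]
  rw [hz, sub_zero]

theorem plog_pexp {f : PowerSeries R} (hf : constantCoeff f = 0) : plog (pexp f) = f := by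
  haveI := PlethAux.nzs (R := R)
  haveI : IsAddTorsionFree R := IsAddTorsionFree.of_module_rat R
  have hu : IsUnit (pexp f) := isUnit_iff_constantCoeff.mpr (by rw [cc_pexp]; exact isUnit_one)
  have h1 : pexp f * d⁄dX R (plog (pexp f)) = pexp f * d⁄dX R f := by
    rw [d_plog (cc_pexp f), d_pexp hf, mul_comm]
  exact PowerSeries.derivative.ext (hu.mul_left_cancel h1) (by rw [cc_plog, hf])

theorem pexp_plog {h : PowerSeries R} (hh : constantCoeff h = 1) : pexp (plog h) = h := by
  haveI := PlethAux.nzs (R := R)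
  haveI : IsAddTorsionFree R := IsAddTorsionFree.of_module_rat R
  have hu : IsUnit h := isUnit_iff_constantCoeff.mpr (by rw [hh]; exact isUnit_one)
  obtain ⟨U, hU⟩ := hu
  set u := pexp (plog h) with hu_def
  set v : PowerSeries R := ↑U⁻¹ with hv_def
  have hvh : v * h = 1 := by rw [hv_def, ← hU]; exact_mod_cast U.inv_mul
  have hccv : constantCoeff v = 1 := by
    have h2 := congrArg (constantCoeff) hvh
    rw [map_mul, hh, mul_one, map_one] at h2
    exact h2
  have hdu : d⁄dX R u = d⁄dX R (plog h) * u := d_pexp (cc_plog h)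
  have hdlog : h * d⁄dX R (plog h) = d⁄dX R h := d_plog hh
  have hdv : d⁄dX R v = -(v ^ 2) * d⁄dX R h := by
    have h3 := PowerSeries.derivative_inv U
    rw [hU] at h3
    rw [hv_def]
    simpa using h3
  have hlog2 : d⁄dX R (plog h) = v * d⁄dX R h := by
    calc d⁄dX R (plog h) = (v * h) * d⁄dX R (plog h) := by rw [hvh, one_mul]
      _ = v * (h * d⁄dX R (plog h)) := by ring
      _ = v * d⁄dX R h := by rw [hdlog]
  have hkey : d⁄dX R (u * v) = 0 := by
    rw [Derivation.leibniz, smul_eq_mul, smul_eq_mul, hdu, hdv, hlog2]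
    ring
  have huv : u * v = 1 := by
    apply PowerSeries.derivative.ext
    · rw [hkey]
      exact (Derivation.map_one_eq_zero _).symm
    · rw [map_mul, map_one, cc_pexp, hccv, one_mul]
  calc u = u * (v * h) := by rw [hvh, mul_one]
    _ = (u * v) * h := by ring
    _ = h := by rw [huv, one_mul]

end PlethAux

section PlethMain

variable {R : Type*} [CommRing R] [Algebra ℚ R] (ψ : ℕ → R →ₐ[ℚ] R)

theorem coeff_adams (v : PowerSeries R) {n k : ℕ} (hnk : n ∣ k) :
    coeff k (adams ψ n v) = ψ n (coeff (k / n) v) := by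
  rw [adams, coeff_mk, if_pos hnk]

theorem divisors_pair_sum {M : Type*} [AddCommMonoid M] (k : ℕ) (F : ℕ → ℕ → M) :
    ∑ n ∈ k.divisors, ∑ m ∈ (k / n).divisors, F n m
      = ∑ d ∈ k.divisors, ∑ n ∈ d.divisors, F n (d / n) := by
  rw [Finset.sum_sigma', Finset.sum_sigma']
  refine Finset.sum_nbij' (fun p => ⟨p.1 * p.2, p.1⟩) (fun q => ⟨q.2, q.1 / q.2⟩) ?_ ?_ ?_ ?_ ?_
  · rintro ⟨n, m⟩ hp
    rw [Finset.mem_sigma] at hp ⊢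
    obtain ⟨hn, hm⟩ := hp
    dsimp only at hn hm ⊢
    obtain ⟨hnk, hk⟩ := Nat.mem_divisors.mp hn
    obtain ⟨hmk, hk2⟩ := Nat.mem_divisors.mp hm
    have hnm : n * m ∣ k := (Nat.dvd_div_iff_mul_dvd hnk).mp hmk
    have hnm0 : n * m ≠ 0 := by
      intro h0
      rw [h0] at hnm
      exact hk (Nat.eq_zero_of_zero_dvd hnm)
    exact ⟨Nat.mem_divisors.mpr ⟨hnm, hk⟩, Nat.mem_divisors.mpr ⟨dvd_mul_right n m, hnm0⟩⟩
  · rintro ⟨d, n⟩ hq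
    rw [Finset.mem_sigma] at hq ⊢
    obtain ⟨hd, hn⟩ := hq
    dsimp only at hd hn ⊢
    obtain ⟨hdk, hk⟩ := Nat.mem_divisors.mp hd
    obtain ⟨hnd, hd0⟩ := Nat.mem_divisors.mp hn
    have hn0 : 0 < n := Nat.pos_of_mem_divisors hn
    obtain ⟨e, he⟩ := hdk
    obtain ⟨c, hc⟩ := hnd
    have hdiv : d / n = c := by rw [hc, Nat.mul_div_cancel_left c hn0]
    have hkn : k / n = c * e := by
      rw [he, hc, mul_assoc, Nat.mul_div_cancel_left (c * e) hn0]
    have hkn0 : k / n ≠ 0 := by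
      intro h0
      apply hk
      rw [he, hc, mul_assoc]
      rw [hkn] at h0
      rw [h0, mul_zero]
    refine ⟨Nat.mem_divisors.mpr ⟨⟨c * e, by rw [he, hc, mul_assoc]⟩, hk⟩, Nat.mem_divisors.mpr ⟨?_, hkn0⟩⟩
    rw [hdiv, hkn]
    exact dvd_mul_right c e
  · rintro ⟨n, m⟩ hp
    rw [Finset.mem_sigma] at hp
    obtain ⟨hn, hm⟩ := hp
    dsimp only at hn hm ⊢
    have hn0 : 0 < n := Nat.pos_of_mem_divisors hn
    have h1 : n * m / n = m := Nat.mul_div_cancel_left m hn0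
    simp [h1]
  · rintro ⟨d, n⟩ hq
    rw [Finset.mem_sigma] at hq
    obtain ⟨hd, hn⟩ := hq
    dsimp only at hd hn ⊢
    have hnd : n ∣ d := (Nat.mem_divisors.mp hn).1
    have h1 : n * (d / n) = d := Nat.mul_div_cancel' hnd
    simp [h1]
  · rintro ⟨n, m⟩ hp
    rw [Finset.mem_sigma] at hp
    obtain ⟨hn, hm⟩ := hp
    dsimp only at hn hm ⊢
    have hn0 : 0 < n := Nat.pos_of_mem_divisors hn
    have h1 : n * m / n = m := Nat.mul_div_cancel_left m hn0
    simp [h1]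

theorem moebius_sum (d : ℕ) :
    ∑ n ∈ d.divisors, ((ArithmeticFunction.moebius n : ℤ) : ℚ)
      = if d = 1 then 1 else 0 := by
  have h : ((ArithmeticFunction.moebius * (ArithmeticFunction.zeta : ArithmeticFunction ℤ)) d)
      = (1 : ArithmeticFunction ℤ) d := by
    rw [ArithmeticFunction.moebius_mul_coe_zeta]
  rw [ArithmeticFunction.coe_mul_zeta_apply, ArithmeticFunction.one_apply] at h
  rw [show (∑ n ∈ d.divisors, ((ArithmeticFunction.moebius n : ℤ) : ℚ))
      = (((∑ n ∈ d.divisors, ArithmeticFunction.moebius n : ℤ)) : ℚ) from by push_cast; rfl, h]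
  split_ifs <;> simp

theorem adams_double (hψ : ∀ m n : ℕ, 1 ≤ m → 1 ≤ n → (ψ m).comp (ψ n) = ψ (m * n))
    (v : PowerSeries R) (k : ℕ) (a b : ℕ → ℚ) :
    (∑ n ∈ k.divisors, a n • coeff k (adams ψ n (PowerSeries.mk fun j =>
        ∑ m ∈ j.divisors, b m • coeff j (adams ψ m v))))
      = ∑ d ∈ k.divisors, (∑ n ∈ d.divisors, a n * b (d / n)) • ψ d (coeff (k / d) v) := by
  have step1 : ∀ n ∈ k.divisors,
      a n • coeff k (adams ψ n (PowerSeries.mk fun j =>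
          ∑ m ∈ j.divisors, b m • coeff j (adams ψ m v)))
        = ∑ m ∈ (k / n).divisors, (a n * b m) • ψ (n * m) (coeff (k / (n * m)) v) := by
    intro n hn
    have hnk : n ∣ k := (Nat.mem_divisors.mp hn).1
    have hn0 : 0 < n := Nat.pos_of_mem_divisors hn
    rw [coeff_adams ψ _ hnk, coeff_mk, map_sum, Finset.smul_sum]
    apply Finset.sum_congr rfl
    intro m hm
    have hmk : m ∣ k / n := (Nat.mem_divisors.mp hm).1
    have hm0 : 0 < m := Nat.pos_of_mem_divisors hm
    rw [coeff_adams ψ _ hmk, map_smul, smul_smul, Nat.div_div_eq_div_mul]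
    congr 1
    have := DFunLike.congr_fun (hψ n m hn0 hm0) (coeff (k / (n * m)) v)
    simpa using this
  rw [Finset.sum_congr rfl step1, divisors_pair_sum]
  apply Finset.sum_congr rfl
  intro d hd
  rw [Finset.sum_smul]
  apply Finset.sum_congr rfl
  intro n hn
  have hnd : n ∣ d := (Nat.mem_divisors.mp hn).1
  rw [Nat.mul_div_cancel' hnd]

theorem final_sum (hψ1 : ψ 1 = AlgHom.id ℚ R) (v : PowerSeries R) {k : ℕ} (hk : k ≠ 0)
    (c : ℕ → ℚ) (hc : ∀ d ∈ k.divisors, c d = (if d = 1 then 1 else 0) / d) :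
    ∑ d ∈ k.divisors, c d • ψ d (coeff (k / d) v) = coeff k v := by
  rw [Finset.sum_congr rfl (fun d hd => by rw [hc d hd])]
  rw [Finset.sum_eq_single_of_mem 1 (Nat.one_mem_divisors.mpr hk)]
  · rw [if_pos rfl, Nat.div_one, Nat.cast_one, div_one, one_smul, hψ1]
    rfl
  · intro d _ hne
    rw [if_neg hne, zero_div, zero_smul]

theorem inner_sum_1 {k : ℕ} (d : ℕ) (hd : d ∈ k.divisors) :
    (∑ n ∈ d.divisors, (((ArithmeticFunction.moebius n : ℤ) : ℚ) / n) * (((d / n : ℕ) : ℚ))⁻¹)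
      = (if d = 1 then 1 else 0) / d := by
  have hd0 : 0 < d := Nat.pos_of_mem_divisors hd
  rw [← moebius_sum d, Finset.sum_div]
  apply Finset.sum_congr rfl
  intro n hn
  have hnd : n ∣ d := (Nat.mem_divisors.mp hn).1
  have hn0 : 0 < n := Nat.pos_of_mem_divisors hn
  have hmul : ((n : ℚ)) * (((d / n : ℕ) : ℚ)) = (d : ℚ) := by
    rw [← Nat.cast_mul, Nat.mul_div_cancel' hnd]
  have hnq : ((n : ℚ)) ≠ 0 := Nat.cast_ne_zero.mpr hn0.ne'
  have hdnq : (((d / n : ℕ) : ℚ)) ≠ 0 :=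
    Nat.cast_ne_zero.mpr (Nat.div_pos (Nat.le_of_dvd hd0 hnd) hn0).ne'
  field_simp
  rw [← hmul]; ring

theorem inner_sum_2 {k : ℕ} (d : ℕ) (hd : d ∈ k.divisors) :
    (∑ m ∈ d.divisors, ((m : ℚ))⁻¹ * (((ArithmeticFunction.moebius (d / m) : ℤ) : ℚ) / ((d / m : ℕ) : ℚ)))
      = (if d = 1 then 1 else 0) / d := by
  have hd0 : 0 < d := Nat.pos_of_mem_divisors hd
  rw [← moebius_sum d, ← Nat.sum_div_divisors d
    (fun n => ((ArithmeticFunction.moebius n : ℤ) : ℚ)), Finset.sum_div]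
  apply Finset.sum_congr rfl
  intro m hm
  have hmd : m ∣ d := (Nat.mem_divisors.mp hm).1
  have hm0 : 0 < m := Nat.pos_of_mem_divisors hm
  have hmul : ((m : ℚ)) * (((d / m : ℕ) : ℚ)) = (d : ℚ) := by
    rw [← Nat.cast_mul, Nat.mul_div_cancel' hmd]
  have hmq : ((m : ℚ)) ≠ 0 := Nat.cast_ne_zero.mpr hm0.ne'
  have hdmq : (((d / m : ℕ) : ℚ)) ≠ 0 :=
    Nat.cast_ne_zero.mpr (Nat.div_pos (Nat.le_of_dvd hd0 hmd) hm0).ne'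
  field_simp
  rw [← hmul]; ring

theorem cc_PLog (h : PowerSeries R) : constantCoeff (PLog ψ h) = 0 := by
  rw [PLog, constantCoeff_mk]
  simp

theorem PLog_PExp (hψ1 : ψ 1 = AlgHom.id ℚ R)
    (hψ : ∀ m n : ℕ, 1 ≤ m → 1 ≤ n → (ψ m).comp (ψ n) = ψ (m * n))
    {f : PowerSeries R} (hf : constantCoeff f = 0) : PLog ψ (PExp ψ f) = f := by
  have hccL : constantCoeff (PowerSeries.mk fun j =>
      ∑ m ∈ j.divisors, ((m : ℚ))⁻¹ • coeff j (adams ψ m f)) = 0 := by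
    rw [constantCoeff_mk]
    simp
  have hplog : plog (PExp ψ f) = PowerSeries.mk fun j =>
      ∑ m ∈ j.divisors, ((m : ℚ))⁻¹ • coeff j (adams ψ m f) := plog_pexp hccL
  ext k
  rw [PLog, coeff_mk, hplog]
  rcases eq_or_ne k 0 with rfl | hk
  · simp [coeff_zero_eq_constantCoeff, hf]
  · refine (adams_double ψ hψ f k
      (fun n => ((ArithmeticFunction.moebius n : ℤ) : ℚ) / n)
      (fun m => ((m : ℚ))⁻¹)).trans ?_
    exact final_sum ψ hψ1 f hk _ (fun d hd => inner_sum_1 d hd)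

theorem PExp_PLog (hψ1 : ψ 1 = AlgHom.id ℚ R)
    (hψ : ∀ m n : ℕ, 1 ≤ m → 1 ≤ n → (ψ m).comp (ψ n) = ψ (m * n))
    {h : PowerSeries R} (hh : constantCoeff h = 1) : PExp ψ (PLog ψ h) = h := by
  have hM : (PowerSeries.mk fun j =>
      ∑ m ∈ j.divisors, ((m : ℚ))⁻¹ • coeff j (adams ψ m (PLog ψ h))) = plog h := by
    ext k
    rw [coeff_mk]
    rcases eq_or_ne k 0 with rfl | hk
    · rw [coeff_zero_eq_constantCoeff, cc_plog]
      simp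
    · refine (adams_double ψ hψ (plog h) k
        (fun m => ((m : ℚ))⁻¹)
        (fun n => ((ArithmeticFunction.moebius n : ℤ) : ℚ) / n)).trans ?_
      exact final_sum ψ hψ1 (plog h) hk _ (fun d hd => inner_sum_2 d hd)
  rw [PExp, hM]
  exact pexp_plog hh

end PlethMain

/-- `Log` and `Exp` are mutually inverse: for every `f ∈ z·R⟦z⟧` one has `Log(Exp(f)) = f`,
for every `h ∈ 1 + z·R⟦z⟧` one has `Exp(Log(h)) = h`; in particular `Exp` is a bijection from
`z·R⟦z⟧` onto `1 + z·R⟦z⟧`.  Here `R` is a commutative `ℚ`-algebra equipped with Adams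
operations `ψₙ` (n ≥ 1), i.e. `ℚ`-algebra homomorphisms with `ψ₁ = id` and `ψₘ∘ψₙ = ψₘₙ`. -/
theorem stmt7 {R : Type*} [CommRing R] [Algebra ℚ R]
    (ψ : ℕ → R →ₐ[ℚ] R) (hψ1 : ψ 1 = AlgHom.id ℚ R)
    (hψ : ∀ m n : ℕ, 1 ≤ m → 1 ≤ n → (ψ m).comp (ψ n) = ψ (m * n)) :
    (∀ f : PowerSeries R, constantCoeff f = 0 → PLog ψ (PExp ψ f) = f) ∧
    (∀ h : PowerSeries R, constantCoeff h = 1 → PExp ψ (PLog ψ h) = h) ∧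
    Set.BijOn (PExp ψ) {f : PowerSeries R | constantCoeff f = 0}
      {h : PowerSeries R | constantCoeff h = 1} := by
  refine ⟨fun f hf => PLog_PExp ψ hψ1 hψ hf, fun h hh => PExp_PLog ψ hψ1 hψ hh,
    fun f hf => ?_, fun f hf g hg hfg => ?_, fun h hh => ?_⟩
  · show constantCoeff (PExp ψ f) = 1
    exact cc_pexp _
  · calc f = PLog ψ (PExp ψ f) := (PLog_PExp ψ hψ1 hψ hf).symm
      _ = PLog ψ (PExp ψ g) := by rw [hfg]
      _ = g := PLog_PExp ψ hψ1 hψ hg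
  · exact ⟨PLog ψ h, cc_PLog ψ h, PExp_PLog ψ hψ1 hψ hh⟩
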